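/- Let n ≥ 2, 1 ≤ r < n, C = r·(binom(n-1,r-1))⁻¹, and F(s,y) = C·√(1 - y^(2/r))·s^(r-1) - (n-r)·y/s. Any C¹ solution τ : [s₀,∞) → [-1,1] of τ' = F(s,τ) with τ(s₀) = -1 is strictly increasing on [s₀, ∞). -/

import Mathlib

open Real Set

/-- Euclidean rotational translator ODE: a solution with τ(s₀) = -1 is strictly
increasing on [s₀, ∞). -/
theorem tau_minus_strictMono (n r : ℕ) (hn : 2 ≤ n) (hr1 : 1 ≤ r) (hr2 : r < n)
    (C : ℝ) (hC : C = (r : ℝ) * ((n - 1).choose (r - 1) : ℝ)⁻¹)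
    (F : ℝ → ℝ → ℝ)
    (hF : ∀ s y, F s y = C * Real.sqrt (1 - |y| ^ ((2 : ℝ) / r)) * s ^ (r - 1)
      - ((n : ℝ) - r) * y / s)
    (s₀ : ℝ) (hs₀ : 0 < s₀) (τ : ℝ → ℝ)
    (hmem : ∀ s ∈ Ici s₀, τ s ∈ Icc (-1 : ℝ) 1)
    (hode : ∀ s ∈ Ici s₀, HasDerivAt τ (F s (τ s)) s)
    (hinit : τ s₀ = -1) :
    StrictMonoOn τ (Ici s₀) := by
  have hrR : (1:ℝ) ≤ (r:ℝ) := by exact_mod_cast hr1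
  have hr0 : (0:ℝ) < (r:ℝ) := by linarith
  have hnr : (r:ℝ) < (n:ℝ) := by exact_mod_cast hr2
  have hepos : (0:ℝ) < 2 / (r:ℝ) := by positivity
  have hCpos : 0 < C := by
    rw [hC]
    have : 0 < ((n-1).choose (r-1)) := Nat.choose_pos (by omega)
    have : (0:ℝ) < ((n-1).choose (r-1) : ℝ) := by exact_mod_cast this
    positivity
  set φ : ℝ → ℝ := fun s => F s (τ s) with hφdef
  have hφeq : ∀ s, φ s = C * Real.sqrt (1 - |τ s| ^ ((2 : ℝ) / r)) * s ^ (r - 1)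
      - ((n : ℝ) - r) * τ s / s := fun s => hF s (τ s)
  have hτcont : ContinuousOn τ (Ici s₀) := fun s hs =>
    ((hode s hs).continuousAt).continuousWithinAt
  have hφcont : ContinuousOn φ (Ici s₀) := by
    have h1 : ContinuousOn (fun s => C * Real.sqrt (1 - |τ s| ^ ((2 : ℝ) / r)) * s ^ (r - 1)
        - ((n : ℝ) - r) * τ s / s) (Ici s₀) := by
      apply ContinuousOn.sub
      · exact (continuousOn_const.mul ((continuousOn_const.sub
          ((hτcont.abs).rpow_const (fun x _ => Or.inr hepos.le))).sqrt)).mul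
          ((continuousOn_id).pow _)
      · exact (continuousOn_const.mul hτcont).div continuousOn_id
          (fun x hx => ne_of_gt (lt_of_lt_of_le hs₀ hx))
    exact h1.congr (fun s _ => hφeq s)
  -- positivity of φ when τ s ≤ 0 (and s ≥ s₀)
  have hφpos_nonpos : ∀ s, s₀ ≤ s → τ s ≤ 0 → τ s ≠ -1 → 0 < φ s := by
    intro s hs hτ hne
    have hspos : 0 < s := lt_of_lt_of_le hs₀ hs
    rw [hφeq]
    rcases lt_or_eq_of_le hτ with hlt | heq
    · have h1 : 0 ≤ C * Real.sqrt (1 - |τ s| ^ ((2 : ℝ) / r)) * s ^ (r - 1) := by positivity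
      have h2 : ((n : ℝ) - r) * τ s / s < 0 := by
        apply div_neg_of_neg_of_pos _ hspos
        exact mul_neg_of_pos_of_neg (by linarith) hlt
      linarith
    · rw [heq, abs_zero, Real.zero_rpow (ne_of_gt hepos), sub_zero, Real.sqrt_one, mul_one,
        mul_zero, zero_div, sub_zero]
      positivity
  have hφs₀ : 0 < φ s₀ := by
    rw [hφeq, hinit]
    have h1 : |(-1:ℝ)| = 1 := by norm_num
    rw [h1, Real.one_rpow, sub_self, Real.sqrt_zero, mul_zero, zero_mul, zero_sub]
    have h2 : -(((n:ℝ) - r) * (-1) / s₀) = ((n:ℝ) - r) / s₀ := by ring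
    rw [h2]
    have h3 : (0:ℝ) < (n:ℝ) - r := by linarith
    positivity
  -- main claim: φ > 0 on Ici s₀
  have key : ∀ s ∈ Ici s₀, 0 < φ s := by
    by_contra hcon
    push_neg at hcon
    obtain ⟨s₂, hs₂, hφs₂⟩ := hcon
    set S : Set ℝ := {s | s ∈ Ici s₀ ∧ φ s ≤ 0} with hSdef
    have hSne : S.Nonempty := ⟨s₂, hs₂, hφs₂⟩
    have hSbdd : BddBelow S := ⟨s₀, fun x hx => hx.1⟩
    set s₁ := sInf S with hs₁def
    have hSclosed : IsClosed S := by
      have : S = Ici s₀ ∩ φ ⁻¹' Iic 0 := by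
        ext x; exact Iff.rfl
      rw [this]
      exact hφcont.preimage_isClosed_of_isClosed isClosed_Ici isClosed_Iic
    have hs₁S : s₁ ∈ S := hSclosed.csInf_mem hSne hSbdd
    have hs₁ge : s₀ ≤ s₁ := hs₁S.1
    have hs₁gt : s₀ < s₁ := by
      rcases lt_or_eq_of_le hs₁ge with h | h
      · exact h
      · exact absurd hs₁S.2 (by rw [← h]; linarith)
    have hs₁pos : 0 < s₁ := lt_trans hs₀ hs₁gt
    have hIco : ∀ s ∈ Ico s₀ s₁, 0 < φ s := by
      intro s hs
      by_contra h
      push_neg at h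
      exact absurd (csInf_le hSbdd ⟨hs.1, h⟩) (not_le.mpr hs.2)
    -- φ s₁ = 0 by left-continuity
    have hφs₁ : φ s₁ = 0 := by
      refine le_antisymm hs₁S.2 ?_
      have hlim : Filter.Tendsto φ (nhdsWithin s₁ (Ico s₀ s₁)) (nhds (φ s₁)) := by
        apply (hφcont s₁ hs₁S.1).mono_left
        exact nhdsWithin_mono s₁ (fun x hx => hx.1)
      have hne : (nhdsWithin s₁ (Ico s₀ s₁)).NeBot := by
        rw [← mem_closure_iff_nhdsWithin_neBot, closure_Ico (ne_of_lt hs₁gt)]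
        exact ⟨hs₁ge, le_refl s₁⟩
      exact ge_of_tendsto hlim (Filter.eventually_of_mem self_mem_nhdsWithin
        (fun x hx => (hIco x hx).le))
    -- τ strictly monotone on [s₀, s₁], so τ s₁ > -1
    have hmono : StrictMonoOn τ (Icc s₀ s₁) := by
      apply strictMonoOn_of_deriv_pos (convex_Icc s₀ s₁)
        (hτcont.mono (Icc_subset_Ici_self))
      intro x hx
      rw [interior_Icc] at hx
      rw [(hode x (le_of_lt hx.1)).deriv]
      exact hIco x ⟨hx.1.le, hx.2⟩
    have hτs₁gt : -1 < τ s₁ := by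
      rw [← hinit]
      exact hmono ⟨le_refl s₀, hs₁ge⟩ ⟨hs₁ge, le_refl s₁⟩ hs₁gt
    have hτs₁le : τ s₁ ≤ 1 := (hmem s₁ hs₁S.1).2
    -- τ s₁ > 0
    have hτs₁pos : 0 < τ s₁ := by
      by_contra h
      push_neg at h
      exact absurd hφs₁ (ne_of_gt (hφpos_nonpos s₁ hs₁ge h (ne_of_gt hτs₁gt)))
    -- τ s₁ < 1
    have hτs₁lt : τ s₁ < 1 := by
      rcases lt_or_eq_of_le hτs₁le with h | h
      · exact h
      · exfalso
        have := hφeq s₁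
        rw [h, abs_one, Real.one_rpow, sub_self, Real.sqrt_zero, mul_zero, zero_mul, zero_sub,
          hφs₁] at this
        have h2 : 0 < ((n:ℝ) - r) * 1 / s₁ := by
          have h3 : (0:ℝ) < (n:ℝ) - r := by linarith
          positivity
        linarith
    have hrpowlt : (τ s₁) ^ ((2:ℝ)/r) < 1 := Real.rpow_lt_one hτs₁pos.le hτs₁lt hepos
    have hrpowpos : 0 < 1 - (τ s₁) ^ ((2:ℝ)/r) := by linarith
    -- τ'(s₁) = 0
    have hderτ : HasDerivAt τ 0 s₁ := by
      have := hode s₁ hs₁S.1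
      rwa [show F s₁ (τ s₁) = 0 from hφs₁] at this
    -- local smooth version of φ (without abs)
    have hev : φ =ᶠ[nhds s₁] fun s => C * Real.sqrt (1 - (τ s) ^ ((2 : ℝ) / r)) * s ^ (r - 1)
        - ((n : ℝ) - r) * τ s / s := by
      have hτct : ContinuousAt τ s₁ := (hode s₁ hs₁S.1).continuousAt
      have : ∀ᶠ s in nhds s₁, 0 < τ s := hτct.eventually (eventually_gt_nhds hτs₁pos)
      filter_upwards [this] with s hs
      rw [hφeq, abs_of_pos hs]
    -- derivative of φ at s₁
    have h2 : HasDerivAt (fun s => (τ s) ^ ((2:ℝ)/r))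
        (0 * ((2:ℝ)/r) * (τ s₁) ^ ((2:ℝ)/r - 1)) s₁ :=
      hderτ.rpow_const (Or.inl (ne_of_gt hτs₁pos))
    have h3 := h2.const_sub 1
    have h4 := h3.sqrt (ne_of_gt hrpowpos)
    have h5 := h4.const_mul C
    have h6 := h5.mul (hasDerivAt_pow (r-1) s₁)
    have h7 : HasDerivAt (fun y => ((n:ℝ) - r) * τ y / y)
        ((((n:ℝ) - r) * 0 * s₁ - ((n:ℝ) - r) * τ s₁ * 1) / s₁ ^ 2) s₁ :=
      (hderτ.const_mul ((n:ℝ) - r)).div (hasDerivAt_id s₁) (ne_of_gt hs₁pos)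
    have h8 := h6.sub h7
    have h9 : HasDerivAt φ _ s₁ := h8.congr_of_eventuallyEq hev
    have hc : ((r - 1 : ℕ) : ℝ) = (r:ℝ) - 1 := by
      have : 1 ≤ r := hr1
      push_cast [this]; ring
    have hder : HasDerivAt φ
        (C * Real.sqrt (1 - (τ s₁) ^ ((2:ℝ)/r)) * (((r:ℝ) - 1) * s₁ ^ (r - 1 - 1))
          + ((n:ℝ) - r) * τ s₁ / s₁ ^ 2) s₁ := by
      convert h9 using 1
      simp only [zero_mul, mul_zero, neg_zero, zero_div, zero_add, mul_one, zero_sub, hc]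
      ring
    have hDpos : 0 < C * Real.sqrt (1 - (τ s₁) ^ ((2:ℝ)/r)) * (((r:ℝ) - 1) * s₁ ^ (r - 1 - 1))
        + ((n:ℝ) - r) * τ s₁ / s₁ ^ 2 := by
      have h1 : 0 ≤ C * Real.sqrt (1 - (τ s₁) ^ ((2:ℝ)/r)) * (((r:ℝ) - 1) * s₁ ^ (r - 1 - 1)) := by
        have : (0:ℝ) ≤ (r:ℝ) - 1 := by linarith
        positivity
      have h2 : 0 < ((n:ℝ) - r) * τ s₁ / s₁ ^ 2 := by
        have : (0:ℝ) < (n:ℝ) - r := by linarith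
        positivity
      linarith
    -- slope argument: φ < 0 just left of s₁, contradiction
    have hslope := hasDerivAt_iff_tendsto_slope.mp hder
    have hev2 : ∀ᶠ x in nhdsWithin s₁ {s₁}ᶜ, 0 < slope φ s₁ x :=
      hslope.eventually (eventually_gt_nhds hDpos)
    have hev3 : ∀ᶠ x in nhdsWithin s₁ (Iio s₁), 0 < slope φ s₁ x :=
      hev2.filter_mono (nhdsWithin_mono s₁ (fun x hx => ne_of_lt hx))
    have hev4 : Ioo s₀ s₁ ∈ nhdsWithin s₁ (Iio s₁) :=
      Ioo_mem_nhdsLT_of_mem ⟨hs₁gt, le_refl s₁⟩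
    have hne : (nhdsWithin s₁ (Iio s₁)).NeBot := by infer_instance
    obtain ⟨x, hx1, hx2⟩ := (hev3.and (Filter.eventually_of_mem hev4 (fun x hx => hx))).exists
    -- hx1 : 0 < slope φ s₁ x, hx2 : x ∈ Ioo s₀ s₁
    rw [slope_def_field, hφs₁] at hx1
    have hxlt : x < s₁ := hx2.2
    have : φ x < 0 := by
      rw [div_pos_iff] at hx1
      rcases hx1 with ⟨h1, h2⟩ | ⟨h1, h2⟩
      · linarith
      · linarith
    exact absurd this (not_lt.mpr (hIco x ⟨hx2.1.le, hx2.2⟩).le)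
  -- conclude strict monotonicity
  apply strictMonoOn_of_deriv_pos (convex_Ici s₀) hτcont
  intro x hx
  rw [interior_Ici] at hx
  rw [(hode x (show s₀ ≤ x from le_of_lt (mem_Ioi.mp hx))).deriv]
  exact key x (show s₀ ≤ x from le_of_lt (mem_Ioi.mp hx))
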